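/- For every g ∈ K^×, the K-algebra automorphism of K[t]/(t^{p^n}) determined by t ↦ g·t is an isomorphism of K-Hopf algebras from H_{n,r,f·g^{1-p^{r+1}}} to H_{n,r,f}; in particular H_{n,r,f} and H_{n,r,f·g^{1-p^{r+1}}} are the same K-Hopf algebra up to a change of algebra generator. -/

import Mathlib

open Polynomial TensorProduct

noncomputable section

/-- The truncated polynomial algebra `K[t]/(t^{p^n})`, underlying the Hopf algebra
`H_{n,r,f}`. -/
abbrev TruncAlg (K : Type) [Field K] (p n : ℕ) : Type :=
  AdjoinRoot (X ^ p ^ n : K[X])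

/-- `t`, the image of `X` in `K[t]/(t^{p^n})`. -/
def tgen (K : Type) [Field K] (p n : ℕ) : TruncAlg K p n :=
  AdjoinRoot.root _

/-- The basis `1, t, t^2, …, t^{p^n-1}` of `K[t]/(t^{p^n})`. -/
def tbasis (K : Type) [Field K] (p n : ℕ) :
    Module.Basis (Fin (p ^ n)) K (TruncAlg K p n) :=
  (AdjoinRoot.powerBasis (f := (X ^ p ^ n : K[X]))
    (pow_ne_zero _ Polynomial.X_ne_zero)).basis.reindex
    (finCongr (by simp))

/-- The dual basis functional `z_j ∈ H = H_{n,r,f}^*`, with `z_j (t^i) = δ_{ij}`;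
junk value `0` out of range. -/
def zdual (K : Type) [Field K] (p n : ℕ) (j : ℕ) :
    Module.Dual K (TruncAlg K p n) :=
  if h : j < p ^ n then (tbasis K p n).coord ⟨j, h⟩ else 0

/-- The coefficient `1/(ℓ!(p-ℓ)!)`, computed in the prime field of `K`. -/
def pfCoeff (K : Type) [Field K] (p ℓ : ℕ) : K :=
  ((ℓ.factorial * (p - ℓ).factorial : ℕ) : K)⁻¹

/-- The element `Δ(t) = t⊗1 + 1⊗t + f Σ_{ℓ=1}^{p-1} (1/(ℓ!(p-ℓ)!)) t^{p^r ℓ} ⊗ t^{p^r (p-ℓ)}`. -/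
def Delta_t (K : Type) [Field K] (p n r : ℕ) (f : K) :
    TruncAlg K p n ⊗[K] TruncAlg K p n :=
  tgen K p n ⊗ₜ 1 + 1 ⊗ₜ tgen K p n +
    f • ∑ ℓ ∈ Finset.Icc 1 (p - 1),
      pfCoeff K p ℓ • ((tgen K p n ^ (p ^ r * ℓ)) ⊗ₜ[K] (tgen K p n ^ (p ^ r * (p - ℓ))))

/-- The comultiplication of `H_{n,r,f}` as a linear map, determined by `Δ(t^i) = Δ(t)^i`
(it is the unique `K`-algebra map with `t ↦ Δ(t)`). -/
def DeltaMap (K : Type) [Field K] (p n r : ℕ) (f : K) :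
    TruncAlg K p n →ₗ[K] TruncAlg K p n ⊗[K] TruncAlg K p n :=
  (tbasis K p n).constr K fun i => (Delta_t K p n r f) ^ (i : ℕ)

/-- Convolution product on `H = (H_{n,r,f})^*`:  `(z * z')(h) = mult ((z ⊗ z')(Δ h))`. -/
def conv (K : Type) [Field K] (p n r : ℕ) (f : K)
    (z z' : Module.Dual K (TruncAlg K p n)) : Module.Dual K (TruncAlg K p n) :=
  (LinearMap.mul' K K) ∘ₗ (TensorProduct.map z z') ∘ₗ DeltaMap K p n r f

/-- Convolution powers; the 0th power is the unit `z_0 = ε` of `H`. -/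
def convPow (K : Type) [Field K] (p n r : ℕ) (f : K)
    (z : Module.Dual K (TruncAlg K p n)) : ℕ → Module.Dual K (TruncAlg K p n)
  | 0 => zdual K p n 0
  | m + 1 => conv K p n r f (convPow K p n r f z m) z

/-- The convolution product `z_1^{j 0} · z_p^{j 1} ⋯ z_{p^{m-1}}^{j (m-1)}` in `H`. -/
def zprod (K : Type) [Field K] (p n r : ℕ) (f : K)
    (j : ℕ → ℕ) : ℕ → Module.Dual K (TruncAlg K p n)
  | 0 => zdual K p n 0
  | m + 1 => conv K p n r f (zprod K p n r f j m)
      (convPow K p n r f (zdual K p n (p ^ m)) (j m))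


/-- The `K`-algebra endomorphism of `K[t]/(t^{p^n})` determined by `t ↦ g·t`. -/
def scaleHom (K : Type) [Field K] (p n : ℕ) (g : K) :
    TruncAlg K p n →ₐ[K] TruncAlg K p n :=
  AdjoinRoot.liftAlgHom _ (Algebra.ofId K (TruncAlg K p n)) (algebraMap K (TruncAlg K p n) g * tgen K p n) (by
    have h0 : (AdjoinRoot.root (X ^ p ^ n : K[X])) ^ (p ^ n) = 0 := by
      rw [← AdjoinRoot.mk_X, ← map_pow, AdjoinRoot.mk_self]
    simp [tgen, map_pow, Polynomial.aeval_X, Polynomial.eval₂_X_pow, mul_pow, h0])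

/-- The antipode of `H_{n,r,f}`, the algebra map determined by `t ↦ -t`
(as a linear map, `t^i ↦ (-t)^i`); it is the same for all `f`. -/
def antip (K : Type) [Field K] (p n : ℕ) : TruncAlg K p n →ₗ[K] TruncAlg K p n :=
  (tbasis K p n).constr K fun i => (-(tgen K p n)) ^ (i : ℕ)


section AuxScale

lemma tbasis_apply (K : Type) [Field K] (p n : ℕ) (i : Fin (p ^ n)) :
    tbasis K p n i = tgen K p n ^ (i : ℕ) := by
  rw [tbasis, Module.Basis.reindex_apply, PowerBasis.basis_eq_pow]
  simp [tgen, AdjoinRoot.powerBasis_gen]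

lemma scaleHom_tgen (K : Type) [Field K] (p n : ℕ) (g : K) :
    scaleHom K p n g (tgen K p n) = algebraMap K _ g * tgen K p n := by
  unfold scaleHom tgen
  apply AdjoinRoot.liftAlgHom_root

lemma scaleHom_tbasis (K : Type) [Field K] (p n : ℕ) (g : K) (i : Fin (p ^ n)) :
    scaleHom K p n g (tbasis K p n i) = (g ^ (i : ℕ)) • tbasis K p n i := by
  rw [tbasis_apply, map_pow, scaleHom_tgen, ← Algebra.smul_def, _root_.smul_pow]

lemma scaleHom_tgen_pow (K : Type) [Field K] (p n : ℕ) (g : K) (m : ℕ) :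
    scaleHom K p n g (tgen K p n ^ m) = g ^ m • tgen K p n ^ m := by
  rw [map_pow, scaleHom_tgen, ← Algebra.smul_def, _root_.smul_pow]

lemma scaleHom_comp_cancel (K : Type) [Field K] (p n : ℕ) {a b : K} (hab : a * b = 1) :
    (scaleHom K p n a).comp (scaleHom K p n b) = AlgHom.id K _ := by
  apply AdjoinRoot.algHom_ext
  show scaleHom K p n a (scaleHom K p n b (tgen K p n)) = _
  rw [scaleHom_tgen, map_mul, scaleHom_tgen, AlgHom.commutes, ← mul_assoc,
    ← map_mul, mul_comm b a, hab, map_one, one_mul]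
  rfl

lemma scaleHom_delta_key (K : Type) [Field K] (p n r : ℕ) (hp : 0 < p)
    (f g : K) (hg : g ≠ 0) :
    (Algebra.TensorProduct.map (scaleHom K p n g) (scaleHom K p n g))
        (Delta_t K p n r (f * g ^ ((1 : ℤ) - (p : ℤ) ^ (r + 1))))
      = g • Delta_t K p n r f := by
  unfold Delta_t
  rw [map_add, map_add, Algebra.TensorProduct.map_tmul, Algebra.TensorProduct.map_tmul,
    map_one, scaleHom_tgen, map_smul, map_sum]
  have hsum : ∀ ℓ ∈ Finset.Icc 1 (p - 1),
      (Algebra.TensorProduct.map (scaleHom K p n g) (scaleHom K p n g))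
        (pfCoeff K p ℓ • ((tgen K p n ^ (p ^ r * ℓ)) ⊗ₜ[K] (tgen K p n ^ (p ^ r * (p - ℓ)))))
      = (g ^ (p ^ (r + 1))) • (pfCoeff K p ℓ •
          ((tgen K p n ^ (p ^ r * ℓ)) ⊗ₜ[K] (tgen K p n ^ (p ^ r * (p - ℓ))))) := by
    intro ℓ hℓ
    have hℓp : ℓ ≤ p := le_trans (Finset.mem_Icc.mp hℓ).2 (Nat.sub_le p 1)
    have hexp : p ^ r * ℓ + p ^ r * (p - ℓ) = p ^ (r + 1) := by
      rw [← Nat.mul_add, Nat.add_sub_cancel' hℓp, pow_succ]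
    rw [map_smul, Algebra.TensorProduct.map_tmul, scaleHom_tgen_pow, scaleHom_tgen_pow]
    simp only [smul_tmul', tmul_smul, smul_smul, ← pow_add, hexp]
    rw [Nat.add_comm, hexp, mul_comm]
  rw [Finset.sum_congr rfl hsum, ← Finset.smul_sum, smul_smul, smul_add, smul_add]
  have hfg : f * g ^ ((1 : ℤ) - (p : ℤ) ^ (r + 1)) * g ^ (p ^ (r + 1)) = g * f := by
    rw [mul_assoc, ← zpow_natCast g (p ^ (r + 1)), ← zpow_add₀ hg]
    push_cast
    rw [sub_add_cancel, zpow_one, mul_comm]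
  rw [hfg, mul_smul]
  congr 1
  congr 1
  · rw [← Algebra.smul_def, smul_tmul']
  · rw [← Algebra.smul_def, tmul_smul]


lemma scaleHom_isHopfIso_aux (K : Type) [Field K] (p n r : ℕ) (hp : 0 < p)
    (f g : K) (hg : g ≠ 0) :
    Function.Bijective (scaleHom K p n g) ∧
    scaleHom K p n g (tgen K p n) = algebraMap K _ g * tgen K p n ∧
    (∀ a : TruncAlg K p n,
      DeltaMap K p n r f (scaleHom K p n g a)
        = TensorProduct.map (scaleHom K p n g).toLinearMap (scaleHom K p n g).toLinearMap
            (DeltaMap K p n r (f * g ^ ((1 : ℤ) - (p : ℤ) ^ (r + 1))) a)) ∧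
    (∀ a : TruncAlg K p n,
      zdual K p n 0 (scaleHom K p n g a) = zdual K p n 0 a) ∧
    (∀ a : TruncAlg K p n,
      scaleHom K p n g (antip K p n a) = antip K p n (scaleHom K p n g a)) := by
  have h0 : 0 < p ^ n := pow_pos hp n
  refine ⟨?_, scaleHom_tgen K p n g, ?_, ?_, ?_⟩
  · have h1 := scaleHom_comp_cancel K p n (inv_mul_cancel₀ hg)
    have h2 := scaleHom_comp_cancel K p n (mul_inv_cancel₀ hg)
    constructor
    · intro x y hxy
      have := congrArg (scaleHom K p n g⁻¹) hxy
      rwa [← AlgHom.comp_apply, ← AlgHom.comp_apply, h1, AlgHom.id_apply,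
        AlgHom.id_apply] at this
    · intro x
      exact ⟨scaleHom K p n g⁻¹ x, by rw [← AlgHom.comp_apply, h2, AlgHom.id_apply]⟩
  · have hmap : TensorProduct.map (scaleHom K p n g).toLinearMap (scaleHom K p n g).toLinearMap
        = (Algebra.TensorProduct.map (scaleHom K p n g) (scaleHom K p n g)).toLinearMap := by
      apply TensorProduct.ext'
      intros; rfl
    suffices h : (DeltaMap K p n r f) ∘ₗ (scaleHom K p n g).toLinearMap
        = (TensorProduct.map (scaleHom K p n g).toLinearMap (scaleHom K p n g).toLinearMap)
            ∘ₗ DeltaMap K p n r (f * g ^ ((1 : ℤ) - (p : ℤ) ^ (r + 1))) by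
      exact fun a => LinearMap.congr_fun h a
    apply (tbasis K p n).ext
    intro i
    simp only [LinearMap.comp_apply, AlgHom.toLinearMap_apply, scaleHom_tbasis, map_smul,
      DeltaMap, Module.Basis.constr_basis, hmap, map_pow]
    rw [scaleHom_delta_key K p n r hp f g hg, _root_.smul_pow]
  · suffices h : (zdual K p n 0) ∘ₗ (scaleHom K p n g).toLinearMap = zdual K p n 0 by
      exact fun a => LinearMap.congr_fun h a
    apply (tbasis K p n).ext
    intro i
    simp only [LinearMap.comp_apply, AlgHom.toLinearMap_apply, scaleHom_tbasis, map_smul,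
      zdual, dif_pos h0, Module.Basis.coord_apply, Module.Basis.repr_self]
    rcases eq_or_ne i ⟨0, h0⟩ with h | h
    · subst h; simp
    · simp [Finsupp.single_eq_of_ne h.symm]
  · suffices h : (scaleHom K p n g).toLinearMap ∘ₗ antip K p n
        = antip K p n ∘ₗ (scaleHom K p n g).toLinearMap by
      exact fun a => LinearMap.congr_fun h a
    apply (tbasis K p n).ext
    intro i
    simp only [LinearMap.comp_apply, AlgHom.toLinearMap_apply, antip, Module.Basis.constr_basis,
      scaleHom_tbasis, map_smul, map_pow, map_neg, scaleHom_tgen]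
    rw [← mul_neg, ← Algebra.smul_def, _root_.smul_pow]

end AuxScale

/-- For `g ∈ K^×`, the algebra automorphism of `K[t]/(t^{p^n})`
with `t ↦ g·t` is an isomorphism of `K`-Hopf algebras
`H_{n,r,f·g^{1-p^{r+1}}} → H_{n,r,f}`: it is bijective, sends `t` to `g·t`, and is
compatible with the comultiplications, the counit `ε = z_0`, and the antipode. -/
theorem scaleHom_isHopfIso
    (p : ℕ) [Fact p.Prime] (F : Type) [Field F] [Fintype F] [CharP F p]
    (n r : ℕ) (hr : 0 < r) (hrn : r < n) (hn2r : n ≤ 2 * r)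
    (f : LaurentSeries F) (hf : f ≠ 0) (g : LaurentSeries F) (hg : g ≠ 0) :
    Function.Bijective (scaleHom (LaurentSeries F) p n g) ∧
    scaleHom (LaurentSeries F) p n g (tgen (LaurentSeries F) p n)
      = algebraMap (LaurentSeries F) _ g * tgen (LaurentSeries F) p n ∧
    (∀ a : TruncAlg (LaurentSeries F) p n,
      DeltaMap (LaurentSeries F) p n r f (scaleHom (LaurentSeries F) p n g a)
        = TensorProduct.map (scaleHom (LaurentSeries F) p n g).toLinearMap
            (scaleHom (LaurentSeries F) p n g).toLinearMap
            (DeltaMap (LaurentSeries F) p n r (f * g ^ ((1 : ℤ) - (p : ℤ) ^ (r + 1))) a)) ∧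
    (∀ a : TruncAlg (LaurentSeries F) p n,
      zdual (LaurentSeries F) p n 0 (scaleHom (LaurentSeries F) p n g a)
        = zdual (LaurentSeries F) p n 0 a) ∧
    (∀ a : TruncAlg (LaurentSeries F) p n,
      scaleHom (LaurentSeries F) p n g (antip (LaurentSeries F) p n a)
        = antip (LaurentSeries F) p n (scaleHom (LaurentSeries F) p n g a)) := by
  exact scaleHom_isHopfIso_aux (LaurentSeries F) p n r (Fact.out : p.Prime).pos f g hg

end
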